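/- In a COM, two faces F(X) and F(Y) are parallel (i.e., each is the metric projection of the other) if and only if the supports of X and Y are equal. -/

import Mathlib

open Finset
open scoped Classical

variable {U : Type*}

/-- Hamming distance between two vertices of the hypercube `U → Bool`. -/
def hDist [Fintype U] [DecidableEq U] (x y : U → Bool) : ℕ :=
  (Finset.univ.filter fun i => x i ≠ y i).card

/-- The hypercube graph on `U → Bool`: two vertices are adjacent iff they differ
in exactly one coordinate. -/
def cubeGraph (U : Type*) [Fintype U] [DecidableEq U] : SimpleGraph (U → Bool) where
  Adj x y := hDist x y = 1
  symm := by
    constructor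
    intro x y h
    have hs : (Finset.univ.filter fun i => y i ≠ x i) =
        (Finset.univ.filter fun i => x i ≠ y i) := by
      apply Finset.filter_congr
      intro i _
      exact ne_comm
    simpa [hDist, hs] using h
  loopless := by
    constructor
    intro x h
    simp [hDist] at h

/-- Distance between `x` and `y` inside the subgraph of the hypercube induced by `A`
(`0` if one of them is not in `A`). -/
noncomputable def dIn [Fintype U] [DecidableEq U] (A : Set (U → Bool)) (x y : U → Bool) : ℕ :=
  if h : x ∈ A ∧ y ∈ A then ((cubeGraph U).induce A).dist ⟨x, h.1⟩ ⟨y, h.2⟩ else 0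

/-- A set of vertices of the hypercube is a partial cube if its induced graph is connected
and the induced graph distance coincides with the Hamming distance
(i.e. it is an isometric subgraph of the hypercube). -/
def IsPartialCube [Fintype U] [DecidableEq U] (A : Set (U → Bool)) : Prop :=
  ((cubeGraph U).induce A).Connected ∧ ∀ x ∈ A, ∀ y ∈ A, dIn A x y = hDist x y

/-- `A` shatters the coordinate set `X`. -/
def Shatters [Fintype U] [DecidableEq U] (A : Set (U → Bool)) (X : Finset U) : Prop :=
  ∀ g : U → Bool, ∃ a ∈ A, ∀ i ∈ X, a i = g i

/-- `A` strongly shatters `X`: it contains a full subcube over the coordinates `X`. -/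
def StronglyShatters [Fintype U] [DecidableEq U] (A : Set (U → Bool)) (X : Finset U) : Prop :=
  ∃ a : U → Bool, ∀ g : U → Bool, (fun i => if i ∈ X then g i else a i) ∈ A

/-- An ample set family: every shattered set is strongly shattered. -/
def IsAmple [Fintype U] [DecidableEq U] (A : Set (U → Bool)) : Prop :=
  ∀ X : Finset U, Shatters A X → StronglyShatters A X

/-- Composition of sign vectors: `(X ∘ Y) e = X e` if `X e ≠ 0`, else `Y e`. -/
def comp (X Y : U → SignType) : U → SignType := fun e => if X e = 0 then Y e else X e

/-- The support of a sign vector. -/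
def supp (X : U → SignType) : Set U := {e | X e ≠ 0}

/-- The separator of two sign vectors. -/
def sep [Fintype U] [DecidableEq U] (X Y : U → SignType) : Finset U :=
  Finset.univ.filter fun e => X e * Y e = -1

/-- A complex of oriented matroids: face symmetry and strong elimination. -/
structure IsCOM (L : Set (U → SignType)) : Prop where
  fs : ∀ X ∈ L, ∀ Y ∈ L, comp X (-Y) ∈ L
  se : ∀ X ∈ L, ∀ Y ∈ L, ∀ e : U, X e * Y e = -1 →
      ∃ Z ∈ L, Z e = 0 ∧ ∀ f : U, X f * Y f ≠ -1 → Z f = comp X Y f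

/-- An oriented matroid: composition, strong elimination and symmetry. -/
structure IsOM (L : Set (U → SignType)) : Prop where
  c : ∀ X ∈ L, ∀ Y ∈ L, comp X Y ∈ L
  se : ∀ X ∈ L, ∀ Y ∈ L, ∀ e : U, X e * Y e = -1 →
      ∃ Z ∈ L, Z e = 0 ∧ ∀ f : U, X f * Y f ≠ -1 → Z f = comp X Y f
  sym : ∀ X ∈ L, -X ∈ L

/-- A simple system of sign vectors. -/
def SimpleSV (L : Set (U → SignType)) : Prop :=
  (∀ e : U, ∀ s : SignType, ∃ X ∈ L, X e = s) ∧
  ∀ e f : U, e ≠ f → (∃ X ∈ L, X e * X f = 1) ∧ (∃ Y ∈ L, Y e * Y f = -1)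

/-- The topes of a system of sign vectors: the covectors with full support. -/
def Topes (L : Set (U → SignType)) : Set (U → SignType) := {X ∈ L | ∀ e, X e ≠ 0}

/-- Conversion of a (full support) sign vector to a vertex of the hypercube. -/
def tb (X : U → SignType) : U → Bool := fun e => decide (X e = 1)

/-- The vertex set of the tope graph inside the hypercube. -/
def TopeSet (L : Set (U → SignType)) : Set (U → Bool) := tb '' Topes L

/-- The face of a covector `X`. -/
def face (L : Set (U → SignType)) (X : U → SignType) : Set (U → SignType) :=
  {Z | ∃ Y ∈ L, Z = comp X Y}

/-- The topes of the face `F(X)`: the topes of `L` lying in the cube `C(X)`, i.e. agreeing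
with `X` on the support of `X`. -/
def faceTopes (L : Set (U → SignType)) (X : U → SignType) : Set (U → SignType) :=
  {Z ∈ Topes L | ∀ e, X e ≠ 0 → Z e = X e}

/-- The distance between the faces `F(X)` and `F(Y)` in the tope graph. -/
noncomputable def faceDist [Fintype U] [DecidableEq U]
    (L : Set (U → SignType)) (X Y : U → SignType) : ℕ :=
  sInf {n | ∃ A ∈ faceTopes L X, ∃ B ∈ faceTopes L Y, dIn (TopeSet L) (tb A) (tb B) = n}


section Aux
variable {U : Type*}

-- sign arithmetic lemmas
lemma sgn_mul_neg_iff (a b : SignType) : a * b = -1 ↔ a ≠ 0 ∧ b ≠ 0 ∧ a ≠ b := by revert a b; decide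

lemma sgn_trichotomy (a c : SignType) (hc : c ≠ 0) : a = 0 ∨ a = c ∨ a = -c := by
  revert a c; decide

lemma sgn_neg_ne (c : SignType) (hc : c ≠ 0) : -c ≠ c := by revert c; decide

lemma tb_ne_iff (a b : SignType) (ha : a ≠ 0) (hb : b ≠ 0) :
    (decide (a = 1) ≠ decide (b = 1)) ↔ a ≠ b := by revert a b; decide

lemma comp_mem {L : Set (U → SignType)} (hcom : IsCOM L) {X Y : U → SignType}
    (hX : X ∈ L) (hY : Y ∈ L) : comp X Y ∈ L := by
  have h1 : comp X (-Y) ∈ L := hcom.fs X hX Y hY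
  have h2 : comp X (-(comp X (-Y))) ∈ L := hcom.fs X hX _ h1
  convert h2 using 1
  funext e
  simp only [comp, Pi.neg_apply]
  by_cases h : X e = 0 <;> simp [h]

lemma comp_apply_ne {X Y : U → SignType} {e : U} (h : X e ≠ 0) : comp X Y e = X e := by
  simp [comp, h]

lemma comp_apply_eq {X Y : U → SignType} {e : U} (h : X e = 0) : comp X Y e = Y e := by
  simp [comp, h]

lemma comp_tope {X Y : U → SignType} (hY : ∀ e, Y e ≠ 0) (e : U) : comp X Y e ≠ 0 := by
  by_cases h : X e = 0
  · simpa [comp, h] using hY e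
  · simpa [comp, h]

end Aux

section Aux2
variable {U : Type*} [Fintype U] [DecidableEq U]

lemma exists_tope {L : Set (U → SignType)} (hcom : IsCOM L) (hsimple : SimpleSV L)
    (hne : L.Nonempty) : ∃ T ∈ L, ∀ e, T e ≠ 0 := by
  have key : ∀ s : Finset U, ∃ W ∈ L, ∀ e ∈ s, W e ≠ 0 := by
    intro s
    induction s using Finset.induction_on with
    | empty => obtain ⟨W, hW⟩ := hne; exact ⟨W, hW, by simp⟩
    | @insert a s ha ih =>
      obtain ⟨W, hW, hWs⟩ := ih
      obtain ⟨Xa, hXa, hXae⟩ := hsimple.1 a 1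
      refine ⟨comp W Xa, comp_mem hcom hW hXa, ?_⟩
      intro e he
      rcases Finset.mem_insert.mp he with rfl | hes
      · by_cases h : W e = 0
        · rw [comp_apply_eq h, hXae]; decide
        · rw [comp_apply_ne h]; exact h
      · rw [comp_apply_ne (hWs e hes)]; exact hWs e hes
  obtain ⟨T, hT, hTs⟩ := key Finset.univ
  exact ⟨T, hT, fun e => hTs e (Finset.mem_univ e)⟩

lemma hDist_tope_eq {T T' : U → SignType} (h1 : ∀ e, T e ≠ 0) (h2 : ∀ e, T' e ≠ 0) :
    hDist (tb T) (tb T') = (Finset.univ.filter fun g => T g ≠ T' g).card := by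
  unfold hDist
  congr 1
  apply Finset.filter_congr
  intro g _
  simpa [tb] using tb_ne_iff (T g) (T' g) (h1 g) (h2 g)

lemma hDist_triangle (x y z : U → Bool) : hDist x z ≤ hDist x y + hDist y z := by
  unfold hDist
  calc (Finset.univ.filter fun i => x i ≠ z i).card
      ≤ ((Finset.univ.filter fun i => x i ≠ y i) ∪ (Finset.univ.filter fun i => y i ≠ z i)).card := by
        apply Finset.card_le_card
        intro i hi
        simp only [Finset.mem_filter, Finset.mem_univ, true_and] at hi ⊢
        rw [Finset.mem_union]
        simp only [Finset.mem_filter, Finset.mem_univ, true_and]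
        by_contra hc
        push_neg at hc
        exact hi (hc.1.symm ▸ hc.2 ▸ rfl)
    _ ≤ _ := Finset.card_union_le _ _

lemma walk_length_ge {A : Set (U → Bool)} {x y : A} (w : ((cubeGraph U).induce A).Walk x y) :
    hDist (x : U → Bool) (y : U → Bool) ≤ w.length := by
  induction w with
  | nil => simp [hDist]
  | @cons u v z h w ih =>
    have hadj : hDist (u : U → Bool) (v : U → Bool) = 1 := h
    calc hDist (u : U → Bool) (z : U → Bool)
        ≤ hDist (u : U → Bool) (v : U → Bool) + hDist (v : U → Bool) (z : U → Bool) :=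
          hDist_triangle _ _ _
      _ ≤ 1 + w.length := by rw [hadj]; omega
      _ = (SimpleGraph.Walk.cons h w).length := by simp [SimpleGraph.Walk.length_cons]; omega

lemma mem_TopeSet {L : Set (U → SignType)} {T : U → SignType} (hT : T ∈ L)
    (h1 : ∀ e, T e ≠ 0) : tb T ∈ TopeSet L := ⟨T, ⟨hT, h1⟩, rfl⟩

end Aux2

section Aux3
variable {U : Type*} [Fintype U] [DecidableEq U]

lemma sgn_mul_cases (a b : SignType) (ha : a ≠ 0) (hb : b ≠ 0) : a * b = 1 ∨ a * b = -1 := by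
  revert a b; decide

lemma sgn_split (a b c d : SignType) (hc : c ≠ 0) (hd : d ≠ 0) (h : a * b = -(c * d)) :
    (a = c ∧ b = -d) ∨ (a = -c ∧ b = d) := by revert a b c d; decide

lemma sgn_neg_ne_zero (t : SignType) (ht : t ≠ 0) : -t ≠ 0 := by revert t; decide

lemma sgn_L1 (z t : SignType) (ht : t ≠ 0) : (t ≠ if z = 0 then t else z) ↔ z = -t := by
  revert z t; decide

lemma sgn_L2 (z t : SignType) (ht : t ≠ 0) :
    ((if z = 0 then t else z) ≠ if z = 0 then -t else z) ↔ z = 0 := by revert z t; decide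

lemma sgn_L3 (z t : SignType) (ht : t ≠ 0) : ((if z = 0 then -t else z) ≠ -t) ↔ z = t := by
  revert z t; decide

lemma sgn_opp (t t' : SignType) (ht : t ≠ 0) (ht' : t' ≠ 0) (h : t ≠ t') : t' = -t := by
  revert t t'; decide

lemma walk_main {L : Set (U → SignType)} (hcom : IsCOM L) (hsimple : SimpleSV L) :
    ∀ n (T T' : U → SignType) (hT : T ∈ L) (hT' : T' ∈ L) (h1 : ∀ e, T e ≠ 0)
      (h2 : ∀ e, T' e ≠ 0),
    (Finset.univ.filter fun g => T g ≠ T' g).card = n →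
    ∃ w : ((cubeGraph U).induce (TopeSet L)).Walk
        ⟨tb T, mem_TopeSet hT h1⟩ ⟨tb T', mem_TopeSet hT' h2⟩,
      w.length = n := by
  intro n
  induction n using Nat.strong_induction_on with
  | _ n ih =>
  intro T T' hT hT' h1 h2 hcard
  set D := Finset.univ.filter fun g => T g ≠ T' g with hD
  match n, hcard with
  | 0, hcard =>
    have hTT : T = T' := by
      funext g
      by_contra hg
      have : g ∈ D := by simp [hD, hg]
      rw [Finset.card_eq_zero] at hcard
      simp [hcard] at this
    subst hTT
    exact ⟨SimpleGraph.Walk.nil, rfl⟩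
  | 1, hcard =>
    have hadj : ((cubeGraph U).induce (TopeSet L)).Adj
        ⟨tb T, mem_TopeSet hT h1⟩ ⟨tb T', mem_TopeSet hT' h2⟩ := by
      show hDist (tb T) (tb T') = 1
      rw [hDist_tope_eq h1 h2]; exact hcard
    exact ⟨SimpleGraph.Walk.cons hadj SimpleGraph.Walk.nil, rfl⟩
  | (m+2), hcard =>
    -- pick e in the separator
    have hDne : D.Nonempty := Finset.card_pos.mp (by omega)
    obtain ⟨e, heD⟩ := hDne
    have hTe : T e ≠ T' e := by simpa [hD] using heD
    have hprod : T e * T' e = -1 := (sgn_mul_neg_iff _ _).mpr ⟨h1 e, h2 e, hTe⟩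
    obtain ⟨Z, hZL, hZe, hZoff⟩ := hcom.se T hT T' hT' e hprod
    have hZout : ∀ g, T g = T' g → Z g = T g := by
      intro g hg
      have hne : T g * T' g ≠ -1 := by
        simp only [ne_eq, sgn_mul_neg_iff]; tauto
      rw [hZoff g hne, comp_apply_ne (h1 g)]
    -- obtain the corrected covector Z₁
    obtain ⟨Z₁, hZ₁L, hout, w0, wp, wm⟩ :
        ∃ Z₁, Z₁ ∈ L ∧ (∀ g, T g = T' g → Z₁ g = T g) ∧
          (∃ g, T g ≠ T' g ∧ Z₁ g ≠ 0) ∧ (∃ g, T g ≠ T' g ∧ Z₁ g ≠ T g) ∧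
          (∃ g, T g ≠ T' g ∧ Z₁ g ≠ -T g) := by
      by_cases hZD : ∀ g, T g ≠ T' g → Z g = 0
      · -- hard case: Z vanishes on the whole separator
        have hcard2 : 1 ≤ (D.erase e).card := by
          rw [Finset.card_erase_of_mem heD]; omega
        obtain ⟨f, hf⟩ : (D.erase e).Nonempty := Finset.card_pos.mp (by omega)
        have hfe : f ≠ e := (Finset.mem_erase.mp hf).1
        have hfD : T f ≠ T' f := by
          have := (Finset.mem_erase.mp hf).2
          simpa [hD] using this
        obtain ⟨W, hW, hWprod⟩ : ∃ W ∈ L, W e * W f = -(T e * T f) := by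
          rcases sgn_mul_cases (T e) (T f) (h1 e) (h1 f) with hc | hc
          · obtain ⟨W, hW, hWp⟩ := (hsimple.2 e f (Ne.symm hfe)).2
            exact ⟨W, hW, by rw [hWp, hc]⟩
          · obtain ⟨W, hW, hWp⟩ := (hsimple.2 e f (Ne.symm hfe)).1
            exact ⟨W, hW, by rw [hWp, hc]; rfl⟩
        have hZ₁e : comp Z W e = W e := comp_apply_eq (hZD e hTe)
        have hZ₁f : comp Z W f = W f := comp_apply_eq (hZD f hfD)
        refine ⟨comp Z W, comp_mem hcom hZL hW, ?_, ?_⟩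
        · intro g hg
          exact (comp_apply_ne (by rw [hZout g hg]; exact h1 g)).trans (hZout g hg)
        · rcases sgn_split (W e) (W f) (T e) (T f) (h1 e) (h1 f) hWprod with ⟨he1, hf1⟩ | ⟨he1, hf1⟩
          · exact ⟨⟨e, hTe, by rw [hZ₁e, he1]; exact h1 e⟩,
              ⟨f, hfD, by rw [hZ₁f, hf1]; exact sgn_neg_ne _ (h1 f)⟩,
              ⟨e, hTe, by rw [hZ₁e, he1]; exact Ne.symm (sgn_neg_ne _ (h1 e))⟩⟩
          · exact ⟨⟨e, hTe, by rw [hZ₁e, he1]; exact sgn_neg_ne_zero _ (h1 e)⟩,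
              ⟨e, hTe, by rw [hZ₁e, he1]; exact sgn_neg_ne _ (h1 e)⟩,
              ⟨f, hfD, by rw [hZ₁f, hf1]; exact Ne.symm (sgn_neg_ne _ (h1 f))⟩⟩
      · push_neg at hZD
        obtain ⟨g, hgD, hgZ⟩ := hZD
        exact ⟨Z, hZL, hZout, ⟨g, hgD, hgZ⟩,
          ⟨e, hTe, by rw [hZe]; exact fun h => h1 e h.symm⟩,
          ⟨e, hTe, by rw [hZe]; exact fun h => sgn_neg_ne_zero _ (h1 e) h.symm⟩⟩
    -- the two intermediate topes
    have hT1L : comp Z₁ T ∈ L := comp_mem hcom hZ₁L hT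
    have hT2L : comp Z₁ (-T) ∈ L := hcom.fs Z₁ hZ₁L T hT
    set T₁ := comp Z₁ T with hT₁def
    set T₂ := comp Z₁ (-T) with hT₂def
    have h1' : ∀ g, T₁ g ≠ 0 := comp_tope h1
    have h2' : ∀ g, T₂ g ≠ 0 :=
      comp_tope (fun g => by simp only [Pi.neg_apply]; exact sgn_neg_ne_zero _ (h1 g))
    have hT₁g : ∀ g, T₁ g = if Z₁ g = 0 then T g else Z₁ g := fun g => rfl
    have hT₂g : ∀ g, T₂ g = if Z₁ g = 0 then -(T g) else Z₁ g := fun g => rfl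
    -- pointwise characterizations of the three separators
    have key1 : ∀ g, (T g ≠ T₁ g) ↔ (T g ≠ T' g ∧ Z₁ g = -T g) := by
      intro g
      by_cases hg : T g = T' g
      · have hz : Z₁ g = T g := hout g hg
        have hv : T₁ g = T g := by rw [hT₁g g, hz]; simp
        simp [hv, hg]
      · rw [hT₁g g, sgn_L1 _ _ (h1 g)]
        simp [hg]
    have key2 : ∀ g, (T₁ g ≠ T₂ g) ↔ (T g ≠ T' g ∧ Z₁ g = 0) := by
      intro g
      by_cases hg : T g = T' g
      · have hz : Z₁ g = T g := hout g hg
        have hv1 : T₁ g = T g := by rw [hT₁g g, hz]; simp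
        have hv2 : T₂ g = T g := by rw [hT₂g g, hz]; simp [h1 g]
        simp [hv1, hv2, hg]
      · rw [hT₁g g, hT₂g g, sgn_L2 _ _ (h1 g)]
        simp [hg]
    have key3 : ∀ g, (T₂ g ≠ T' g) ↔ (T g ≠ T' g ∧ Z₁ g = T g) := by
      intro g
      by_cases hg : T g = T' g
      · have hz : Z₁ g = T g := hout g hg
        have hv2 : T₂ g = T g := by rw [hT₂g g, hz]; simp [h1 g]
        simp [hv2, hg]
      · have hop : T' g = -(T g) := sgn_opp _ _ (h1 g) (h2 g) hg
        rw [hT₂g g, hop, sgn_L3 _ _ (h1 g)]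
        simp [hg]
        exact fun _ => h1 g
    -- the three separators as subsets of D
    have e1 : (Finset.univ.filter fun g => T g ≠ T₁ g)
        = D.filter fun g => Z₁ g = -T g := by
      ext g; simp [key1 g, hD]
    have e2 : (Finset.univ.filter fun g => T₁ g ≠ T₂ g)
        = D.filter fun g => Z₁ g = 0 := by
      ext g; simp [key2 g, hD]
    have e3 : (Finset.univ.filter fun g => T₂ g ≠ T' g)
        = D.filter fun g => Z₁ g = T g := by
      ext g; simp [key3 g, hD]
    -- cardinalities
    have hdisj : Disjoint (D.filter fun g => Z₁ g = 0) (D.filter fun g => Z₁ g = T g) := by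
      rw [Finset.disjoint_left]
      intro g hg0 hgt
      have h0 : Z₁ g = 0 := (Finset.mem_filter.mp hg0).2
      have ht : Z₁ g = T g := (Finset.mem_filter.mp hgt).2
      exact h1 g (ht.symm.trans h0)
    have sgn_not_neg : ∀ z t : SignType, t ≠ 0 → ((z = 0 ∨ z = t) ↔ ¬(z = -t)) := by decide
    have hunion : (D.filter fun g => Z₁ g = 0) ∪ (D.filter fun g => Z₁ g = T g)
        = D.filter fun g => ¬(Z₁ g = -T g) := by
      rw [← Finset.filter_or]
      apply Finset.filter_congr
      intro g _
      exact sgn_not_neg _ _ (h1 g)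
    have hsum : (D.filter fun g => Z₁ g = -T g).card
        + ((D.filter fun g => Z₁ g = 0).card + (D.filter fun g => Z₁ g = T g).card)
        = m + 2 := by
      rw [← Finset.card_union_of_disjoint hdisj, hunion,
        Finset.card_filter_add_card_filter_not]
      exact hcard
    have bnd : ∀ (p : U → Prop) (hp : DecidablePred p), (∃ g, T g ≠ T' g ∧ ¬ p g) →
        (D.filter p).card < m + 2 := by
      intro p hp ⟨g, hg, hgp⟩
      have hgD : g ∈ D := by simp [hD, hg]
      have hss : D.filter p ⊂ D :=
        (Finset.ssubset_iff_of_subset (Finset.filter_subset _ _)).mpr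
          ⟨g, hgD, fun hmem => hgp (Finset.mem_filter.mp hmem).2⟩
      have := Finset.card_lt_card hss
      rwa [hcard] at this
    have b1 : (D.filter fun g => Z₁ g = -T g).card < m + 2 := by
      obtain ⟨g, hg, hne⟩ := wm; exact bnd _ _ ⟨g, hg, hne⟩
    have b2 : (D.filter fun g => Z₁ g = 0).card < m + 2 := by
      obtain ⟨g, hg, hne⟩ := w0; exact bnd _ _ ⟨g, hg, hne⟩
    have b3 : (D.filter fun g => Z₁ g = T g).card < m + 2 := by
      obtain ⟨g, hg, hne⟩ := wp; exact bnd _ _ ⟨g, hg, hne⟩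
    obtain ⟨w₁, hw₁⟩ := ih _ b1 T T₁ hT hT1L h1 h1' (congrArg Finset.card e1)
    obtain ⟨w₂, hw₂⟩ := ih _ b2 T₁ T₂ hT1L hT2L h1' h2' (congrArg Finset.card e2)
    obtain ⟨w₃, hw₃⟩ := ih _ b3 T₂ T' hT2L hT' h2' h2 (congrArg Finset.card e3)
    refine ⟨w₁.append (w₂.append w₃), ?_⟩
    rw [SimpleGraph.Walk.length_append, SimpleGraph.Walk.length_append, hw₁, hw₂, hw₃]
    exact hsum

end Aux3

section Aux4
variable {U : Type*} [Fintype U] [DecidableEq U]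

lemma dIn_topes {L : Set (U → SignType)} (hcom : IsCOM L) (hsimple : SimpleSV L)
    {T T' : U → SignType} (hT : T ∈ L) (hT' : T' ∈ L) (h1 : ∀ e, T e ≠ 0)
    (h2 : ∀ e, T' e ≠ 0) :
    dIn (TopeSet L) (tb T) (tb T') = hDist (tb T) (tb T') := by
  have m1 := mem_TopeSet hT h1
  have m2 := mem_TopeSet hT' h2
  rw [dIn, dif_pos ⟨m1, m2⟩]
  obtain ⟨w, hw⟩ := walk_main hcom hsimple
    ((Finset.univ.filter fun g => T g ≠ T' g).card) T T' hT hT' h1 h2 rfl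
  have hub : ((cubeGraph U).induce (TopeSet L)).dist ⟨tb T, m1⟩ ⟨tb T', m2⟩ ≤
      hDist (tb T) (tb T') := by
    rw [hDist_tope_eq h1 h2, ← hw]
    exact SimpleGraph.dist_le w
  have hreach : ((cubeGraph U).induce (TopeSet L)).Reachable ⟨tb T, m1⟩ ⟨tb T', m2⟩ := ⟨w⟩
  obtain ⟨w', hw'⟩ := hreach.exists_walk_length_eq_dist
  have hlb : hDist (tb T) (tb T') ≤
      ((cubeGraph U).induce (TopeSet L)).dist ⟨tb T, m1⟩ ⟨tb T', m2⟩ := by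
    rw [← hw']
    exact walk_length_ge w'
  omega

end Aux4

section Aux5
variable {U : Type*} [Fintype U] [DecidableEq U]

lemma comp_mem_faceTopes {L : Set (U → SignType)} (hcom : IsCOM L) {X T : U → SignType}
    (hX : X ∈ L) (hT : T ∈ L) (hTt : ∀ e, T e ≠ 0) : comp X T ∈ faceTopes L X :=
  ⟨⟨comp_mem hcom hX hT, comp_tope hTt⟩, fun _ he => comp_apply_ne he⟩

lemma faceTopes_subset {L : Set (U → SignType)} {X A : U → SignType}
    (hA : A ∈ faceTopes L X) : A ∈ L ∧ (∀ e, A e ≠ 0) ∧ (∀ e, X e ≠ 0 → A e = X e) :=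
  ⟨hA.1.1, hA.1.2, hA.2⟩

lemma hDist_comm (x y : U → Bool) : hDist x y = hDist y x := by
  unfold hDist
  congr 1
  apply Finset.filter_congr
  intro i _
  exact ne_comm

lemma sep_comm (X Y : U → SignType) : sep X Y = sep Y X := by
  unfold sep
  apply Finset.filter_congr
  intro e _
  rw [mul_comm]

lemma hDist_face_ge {L : Set (U → SignType)} {X Y A B : U → SignType}
    (hA : A ∈ faceTopes L X) (hB : B ∈ faceTopes L Y) :
    (sep X Y).card ≤ hDist (tb A) (tb B) := by
  obtain ⟨_, hAt, hAX⟩ := faceTopes_subset hA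
  obtain ⟨_, hBt, hBY⟩ := faceTopes_subset hB
  apply Finset.card_le_card
  intro g hg
  have hm : X g * Y g = -1 := by simpa [sep] using hg
  obtain ⟨hX0, hY0, hXY⟩ := (sgn_mul_neg_iff _ _).mp hm
  simp only [hDist, Finset.mem_filter, Finset.mem_univ, true_and]
  rw [show tb A g = decide (A g = 1) from rfl, show tb B g = decide (B g = 1) from rfl,
    tb_ne_iff _ _ (hAt g) (hBt g)]
  rw [hAX g hX0, hBY g hY0]
  exact hXY

lemma faceDist_eq {L : Set (U → SignType)} (hcom : IsCOM L) (hsimple : SimpleSV L)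
    (hne : L.Nonempty) {X Y : U → SignType} (hX : X ∈ L) (hY : Y ∈ L) :
    faceDist L X Y = (sep X Y).card := by
  obtain ⟨T₀, hT₀, hT₀t⟩ := exists_tope hcom hsimple hne
  set A₀ := comp X (comp Y T₀) with hA₀def
  set B₀ := comp Y A₀ with hB₀def
  have hYT : comp Y T₀ ∈ L := comp_mem hcom hY hT₀
  have hYTt : ∀ e, comp Y T₀ e ≠ 0 := comp_tope hT₀t
  have hA₀ : A₀ ∈ faceTopes L X := comp_mem_faceTopes hcom hX hYT hYTt
  have hA₀L : A₀ ∈ L := hA₀.1.1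
  have hA₀t : ∀ e, A₀ e ≠ 0 := hA₀.1.2
  have hB₀ : B₀ ∈ faceTopes L Y := comp_mem_faceTopes hcom hY hA₀L hA₀t
  have hB₀L : B₀ ∈ L := hB₀.1.1
  have hB₀t : ∀ e, B₀ e ≠ 0 := hB₀.1.2
  have hd : hDist (tb A₀) (tb B₀) = (sep X Y).card := by
    rw [hDist_tope_eq hA₀t hB₀t]
    congr 1
    ext g
    simp only [Finset.mem_filter, Finset.mem_univ, true_and, sep]
    rw [sgn_mul_neg_iff]
    by_cases hXg : X g = 0
    · by_cases hYg : Y g = 0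
      · have : B₀ g = A₀ g := by rw [hB₀def, comp_apply_eq hYg]
        simp [this, hXg]
      · have h1 : A₀ g = Y g := by
          rw [hA₀def, comp_apply_eq hXg, comp_apply_ne hYg]
        have h2 : B₀ g = Y g := by rw [hB₀def, comp_apply_ne hYg]
        simp [h1, h2, hXg]
    · have h1 : A₀ g = X g := by rw [hA₀def, comp_apply_ne hXg]
      by_cases hYg : Y g = 0
      · have h2 : B₀ g = A₀ g := by rw [hB₀def, comp_apply_eq hYg]
        simp [h2, hYg]
      · have h2 : B₀ g = Y g := by rw [hB₀def, comp_apply_ne hYg]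
        simp [h1, h2, hXg, hYg]
  have hmem : (sep X Y).card ∈
      {n | ∃ A ∈ faceTopes L X, ∃ B ∈ faceTopes L Y, dIn (TopeSet L) (tb A) (tb B) = n} := by
    refine ⟨A₀, hA₀, B₀, hB₀, ?_⟩
    rw [dIn_topes hcom hsimple hA₀L hB₀L hA₀t hB₀t, hd]
  apply le_antisymm
  · exact Nat.sInf_le hmem
  · apply le_csInf ⟨_, hmem⟩
    rintro n ⟨A, hA, B, hB, hd'⟩
    obtain ⟨hAL, hAt, _⟩ := faceTopes_subset hA
    obtain ⟨hBL, hBt, _⟩ := faceTopes_subset hB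
    rw [← hd', dIn_topes hcom hsimple hAL hBL hAt hBt]
    exact hDist_face_ge hA hB

end Aux5

section Aux6
variable {U : Type*} [Fintype U] [DecidableEq U]

lemma far_tope {L : Set (U → SignType)} (hcom : IsCOM L) (hsimple : SimpleSV L)
    (hne : L.Nonempty) {X Y : U → SignType} (hX : X ∈ L) (hY : Y ∈ L) {e : U}
    (hXe : X e ≠ 0) (hYe : Y e = 0) :
    ∃ B ∈ faceTopes L Y, ∀ A ∈ faceTopes L X, (sep X Y).card < hDist (tb A) (tb B) := by
  obtain ⟨T₀, hT₀, hT₀t⟩ := exists_tope hcom hsimple hne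
  set A₀ := comp X T₀ with hA₀def
  have hA₀ : A₀ ∈ faceTopes L X := comp_mem_faceTopes hcom hX hT₀ hT₀t
  have hA₀L : A₀ ∈ L := hA₀.1.1
  have hA₀t : ∀ g, A₀ g ≠ 0 := hA₀.1.2
  set B := comp Y (-A₀) with hBdef
  have hBL : B ∈ L := hcom.fs Y hY A₀ hA₀L
  have hBt : ∀ g, B g ≠ 0 :=
    comp_tope fun g => by simp only [Pi.neg_apply]; exact sgn_neg_ne_zero _ (hA₀t g)
  have hB : B ∈ faceTopes L Y := ⟨⟨hBL, hBt⟩, fun g hg => comp_apply_ne hg⟩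
  refine ⟨B, hB, ?_⟩
  intro A hA
  obtain ⟨hAL, hAt, hAX⟩ := faceTopes_subset hA
  have hBe : B e = -(X e) := by
    rw [hBdef, comp_apply_eq hYe]
    simp only [Pi.neg_apply]
    rw [hA₀def, comp_apply_ne hXe]
  have hsub : insert e (sep X Y) ⊆ Finset.univ.filter fun g => tb A g ≠ tb B g := by
    intro g hg
    simp only [Finset.mem_filter, Finset.mem_univ, true_and]
    rcases Finset.mem_insert.mp hg with rfl | hgs
    · rw [show tb A g = decide (A g = 1) from rfl, show tb B g = decide (B g = 1) from rfl,
        tb_ne_iff _ _ (hAt g) (hBt g), hAX g hXe, hBe]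
      exact Ne.symm (sgn_neg_ne _ hXe)
    · have hm : X g * Y g = -1 := by simpa [sep] using hgs
      obtain ⟨hX0, hY0, hXY⟩ := (sgn_mul_neg_iff _ _).mp hm
      rw [show tb A g = decide (A g = 1) from rfl, show tb B g = decide (B g = 1) from rfl,
        tb_ne_iff _ _ (hAt g) (hBt g), hAX g hX0, hB.2 g hY0]
      exact hXY
  have hins : (insert e (sep X Y)).card = (sep X Y).card + 1 := by
    rw [Finset.card_insert_of_notMem]
    simp [sep, hYe]
  have := Finset.card_le_card hsub
  rw [hins] at this
  unfold hDist
  omega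

end Aux6


/-- In a (simple) COM, two faces `F(X)` and `F(Y)` are parallel (each is
the metric projection of the other) if and only if `X` and `Y` have the same support. -/
theorem stmt13 [Fintype U] [DecidableEq U] (L : Set (U → SignType))
    (hcom : IsCOM L) (hsimple : SimpleSV L) (hne : L.Nonempty)
    (X : U → SignType) (hX : X ∈ L) (Y : U → SignType) (hY : Y ∈ L) :
    ((∀ A ∈ faceTopes L X, ∃ B ∈ faceTopes L Y,
        dIn (TopeSet L) (tb A) (tb B) = faceDist L X Y) ∧
     (∀ B ∈ faceTopes L Y, ∃ A ∈ faceTopes L X,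
        dIn (TopeSet L) (tb A) (tb B) = faceDist L X Y)) ↔
      supp X = supp Y := by
  constructor
  · rintro ⟨P1, P2⟩
    apply Set.ext
    intro g
    show X g ≠ 0 ↔ Y g ≠ 0
    constructor
    · intro hXg
      by_contra hYg'
      have hYg : Y g = 0 := hYg'
      obtain ⟨B, hB, hfar⟩ := far_tope hcom hsimple hne hX hY hXg hYg
      obtain ⟨A, hA, hd⟩ := P2 B hB
      rw [faceDist_eq hcom hsimple hne hX hY] at hd
      obtain ⟨hAL, hAt, _⟩ := faceTopes_subset hA
      obtain ⟨hBL, hBt, _⟩ := faceTopes_subset hB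
      rw [dIn_topes hcom hsimple hAL hBL hAt hBt] at hd
      have := hfar A hA
      omega
    · intro hYg
      by_contra hXg'
      have hXg : X g = 0 := hXg'
      obtain ⟨B, hB, hfar⟩ := far_tope hcom hsimple hne hY hX hYg hXg
      obtain ⟨C, hC, hd⟩ := P1 B hB
      rw [faceDist_eq hcom hsimple hne hX hY] at hd
      obtain ⟨hBL, hBt, _⟩ := faceTopes_subset hB
      obtain ⟨hCL, hCt, _⟩ := faceTopes_subset hC
      rw [dIn_topes hcom hsimple hBL hCL hBt hCt] at hd
      have := hfar C hC
      rw [sep_comm Y X, hDist_comm] at this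
      omega
  · intro hsupp
    have hs : ∀ g, (X g ≠ 0 ↔ Y g ≠ 0) := by
      intro g
      rw [Set.ext_iff] at hsupp
      exact hsupp g
    constructor
    · intro A hA
      obtain ⟨hAL, hAt, hAX⟩ := faceTopes_subset hA
      refine ⟨comp Y A, comp_mem_faceTopes hcom hY hAL hAt, ?_⟩
      rw [dIn_topes hcom hsimple hAL (comp_mem hcom hY hAL) hAt (comp_tope hAt),
        faceDist_eq hcom hsimple hne hX hY, hDist_tope_eq hAt (comp_tope hAt)]
      congr 1
      ext g
      simp only [Finset.mem_filter, Finset.mem_univ, true_and, sep]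
      rw [sgn_mul_neg_iff]
      by_cases hYg : Y g = 0
      · rw [comp_apply_eq hYg]
        simp [hYg]
      · rw [comp_apply_ne hYg]
        have hXg : X g ≠ 0 := (hs g).mpr hYg
        rw [hAX g hXg]
        simp [hXg, hYg]
    · intro B hB
      obtain ⟨hBL, hBt, hBY⟩ := faceTopes_subset hB
      refine ⟨comp X B, comp_mem_faceTopes hcom hX hBL hBt, ?_⟩
      rw [dIn_topes hcom hsimple (comp_mem hcom hX hBL) hBL (comp_tope hBt) hBt,
        faceDist_eq hcom hsimple hne hX hY, hDist_tope_eq (comp_tope hBt) hBt]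
      congr 1
      ext g
      simp only [Finset.mem_filter, Finset.mem_univ, true_and, sep]
      rw [sgn_mul_neg_iff]
      by_cases hXg : X g = 0
      · rw [comp_apply_eq hXg]
        simp [hXg]
      · rw [comp_apply_ne hXg]
        have hYg : Y g ≠ 0 := (hs g).mp hXg
        rw [hBY g hYg]
        simp [hXg, hYg]
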